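/- Let Y be a real inner product space and let x_0, …, x_m be distinct points of Y. Then the following are equivalent: (i) the family (x_0,…,x_m) is affinely dependent (i.e. not affinely independent over ℝ); (ii) there exists a nonzero ξ ∈ ℝ^{m+1} with ∑_i ξ_i = 0 and ∑_i ξ_i x_i = 0; (iii) there exists a nonzero ξ ∈ ℝ^{m+1} with ∑_i ξ_i = 0 and ∑_{i,j} ξ_i ξ_j ‖x_i − x_j‖² = 0 (i.e. {x_0,…,x_m} admits a nontrivial 2-polygonal equality). -/

import Mathlib

open Finset

lemma sum_sum_norm_sub_sq {Y : Type*} [NormedAddCommGroup Y] [InnerProductSpace ℝ Y]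
    {n : ℕ} (x : Fin n → Y) (ξ : Fin n → ℝ) (hs : ∑ i, ξ i = 0) :
    ∑ i, ∑ j, ξ i * ξ j * ‖x i - x j‖ ^ 2 = -2 * ‖∑ i, ξ i • x i‖ ^ 2 := by
  have key : ∀ i j, ξ i * ξ j * ‖x i - x j‖ ^ 2 =
      ξ i * ξ j * ‖x i‖ ^ 2 + ξ i * ξ j * ‖x j‖ ^ 2
        - 2 * (ξ i * ξ j * inner ℝ (x i) (x j)) := by
    intro i j
    have := @norm_sub_sq_real Y _ _ (x i) (x j)
    rw [this]; ring
  have h1 : ∑ i, ∑ j, ξ i * ξ j * ‖x i‖ ^ 2 = 0 := by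
    simp_rw [show ∀ i j, ξ i * ξ j * ‖x i‖^2 = ξ i * ‖x i‖^2 * ξ j from fun i j => by ring,
      ← Finset.mul_sum, hs, mul_zero, Finset.sum_const_zero]
  have h2 : ∑ i, ∑ j, ξ i * ξ j * ‖x j‖ ^ 2 = 0 := by
    simp_rw [show ∀ i j, ξ i * ξ j * ‖x j‖^2 = ξ i * (ξ j * ‖x j‖^2) from fun i j => by ring,
      ← Finset.mul_sum, ← Finset.sum_mul, hs, zero_mul]
  have h3 : (inner ℝ (∑ i, ξ i • x i) (∑ j, ξ j • x j) : ℝ) =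
      ∑ i, ∑ j, ξ i * ξ j * inner ℝ (x i) (x j) := by
    rw [sum_inner]
    refine Finset.sum_congr rfl fun i _ => ?_
    rw [inner_sum]
    refine Finset.sum_congr rfl fun j _ => ?_
    rw [real_inner_smul_left, real_inner_smul_right]; ring
  simp only [key, Finset.sum_sub_distrib, Finset.sum_add_distrib, h1, h2, ← Finset.mul_sum]
  rw [← h3, real_inner_self_eq_norm_sq]; ring

/-- In a real inner product space, a finite family of distinct points is affinely
dependent iff some nonzero weights summing to zero annihilate the points, iff the
points admit a nontrivial 2-polygonal equality. -/
theorem stmt13 (Y : Type*) [NormedAddCommGroup Y] [InnerProductSpace ℝ Y]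
    (m : ℕ) (x : Fin (m + 1) → Y) (hinj : Function.Injective x) :
    (¬ AffineIndependent ℝ x ↔
      (∃ ξ : Fin (m + 1) → ℝ, ξ ≠ 0 ∧ ∑ i, ξ i = 0 ∧ ∑ i, ξ i • x i = 0)) ∧
    (¬ AffineIndependent ℝ x ↔
      (∃ ξ : Fin (m + 1) → ℝ, ξ ≠ 0 ∧ ∑ i, ξ i = 0 ∧
        ∑ i, ∑ j, ξ i * ξ j * ‖x i - x j‖ ^ 2 = 0)) := by
  have h1 : ¬ AffineIndependent ℝ x ↔
      (∃ ξ : Fin (m + 1) → ℝ, ξ ≠ 0 ∧ ∑ i, ξ i = 0 ∧ ∑ i, ξ i • x i = 0) := by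
    rw [affineIndependent_iff]
    constructor
    · intro h
      push_neg at h
      obtain ⟨s, w, hw0, hwx, i, his, hwi⟩ := h
      refine ⟨fun j => if j ∈ s then w j else 0, ?_, ?_, ?_⟩
      · intro hc
        apply hwi
        have := congrFun hc i
        simpa [his] using this
      · simpa [Finset.sum_ite_mem] using hw0
      · simpa [ite_smul, Finset.sum_ite_mem] using hwx
    · rintro ⟨ξ, hne, hs, hx⟩ h
      apply hne
      funext i
      exact h Finset.univ ξ hs hx i (Finset.mem_univ i)
  refine ⟨h1, h1.trans ?_⟩
  constructor
  · rintro ⟨ξ, hne, hs, hx⟩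
    exact ⟨ξ, hne, hs, by rw [sum_sum_norm_sub_sq x ξ hs, hx, norm_zero]; ring⟩
  · rintro ⟨ξ, hne, hs, hp⟩
    refine ⟨ξ, hne, hs, ?_⟩
    rw [sum_sum_norm_sub_sq x ξ hs] at hp
    have h0 : ‖∑ i, ξ i • x i‖ ^ 2 = 0 := by linarith
    exact norm_eq_zero.mp (pow_eq_zero_iff (n := 2) (by norm_num) |>.mp h0)
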